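/- Assume k is algebraically closed, char k does not divide |G|, and G is abelian. If W ⊆ k[V] is any kG-submodule isomorphic to the regular representation kG, then any k-basis of W is a K-basis of k(V). Consequently D_reg(G,V) = D_span(G,V). -/

import Mathlib

open MvPolynomial

set_option synthInstance.maxHeartbeats 1000000
set_option maxHeartbeats 1000000

section

variable (k : Type*) [Field k] (n : ℕ) (G : Type*) [Group G] [Fintype G]
  [MulSemiringAction G (MvPolynomial (Fin n) k)]
  [MulSemiringAction G (FractionRing (MvPolynomial (Fin n) k))]

local notation "𝔸" => MvPolynomial (Fin n) k
local notation "𝔽" => FractionRing (MvPolynomial (Fin n) k)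
local notation "𝕂" => FixedPoints.subfield G (FractionRing (MvPolynomial (Fin n) k))
local notation "ιF" =>
  algebraMap (MvPolynomial (Fin n) k) (FractionRing (MvPolynomial (Fin n) k))

set_option linter.unusedSectionVars false in
set_option linter.unusedVariables false in
theorem auxDRS_rho_inj (hfaithful : ∀ g : G, (∀ p : 𝔸, g • p = p) → g = 1)
    (hcomp : ∀ (g : G) (p : 𝔸), g • (ιF p) = ιF (g • p)) :
    ∀ g₁ g₂ : G, (∀ x : 𝔽, g₁ • x = g₂ • x) → g₁ = g₂ := by
  intro g₁ g₂ h
  have h1 : g₂⁻¹ * g₁ = 1 := by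
    apply hfaithful
    intro p
    have h2 : (g₂⁻¹ * g₁) • (ιF p) = ιF p := by
      rw [mul_smul, h, ← mul_smul, inv_mul_cancel, one_smul]
    rw [hcomp] at h2
    exact IsFractionRing.injective 𝔸 𝔽 h2
  rw [inv_mul_eq_one] at h1
  exact h1.symm

set_option linter.unusedSectionVars false in
set_option linter.unusedVariables false in
theorem auxDRS_C_fixed [SMulCommClass G k 𝔸]
    (hcomp : ∀ (g : G) (p : 𝔸), g • (ιF p) = ιF (g • p)) (c : k) (g : G) :
    g • (ιF (C c)) = ιF (C c) := by
  rw [hcomp]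
  congr 1
  rw [C_eq_smul_one, smul_comm, smul_one]

set_option linter.unusedSectionVars false in
set_option linter.unusedVariables false in
theorem auxDRS_eig [SMulCommClass G k 𝔸]
    (χ : G →* kˣ) (p : 𝔸) (h : G) :
    h • (∑ g : G, ((χ g⁻¹ : kˣ) : k) • (g • p))
      = ((χ h : kˣ) : k) • ∑ g : G, ((χ g⁻¹ : kˣ) : k) • (g • p) := by
  calc h • ∑ g : G, ((χ g⁻¹ : kˣ) : k) • (g • p)
      = ∑ g : G, ((χ g⁻¹ : kˣ) : k) • ((h * g) • p) := by
        rw [Finset.smul_sum]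
        exact Finset.sum_congr rfl fun g _ => by rw [smul_comm, ← mul_smul]
    _ = ∑ g : G, (((χ h : kˣ) : k) * ((χ g⁻¹ : kˣ) : k)) • (g • p) := by
        refine Fintype.sum_equiv (Equiv.mulLeft h) _ _ fun g => ?_
        simp only [Equiv.coe_mulLeft]
        congr 1
        rw [← Units.val_mul]
        congr 1
        rw [mul_inv_rev, map_mul, map_inv, map_inv, mul_comm (χ g)⁻¹, mul_inv_cancel_left]
    _ = ((χ h : kˣ) : k) • ∑ g : G, ((χ g⁻¹ : kˣ) : k) • (g • p) := by
        rw [Finset.smul_sum]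
        exact Finset.sum_congr rfl fun g _ => by rw [mul_smul]

set_option linter.unusedSectionVars false in
set_option linter.unusedVariables false in
theorem auxDRS_deg [SMulCommClass G k 𝔸]
    (hlin : ∀ (g : G) (i : Fin n), ((g • (X i : 𝔸)).IsHomogeneous 1))
    (g : G) (p : 𝔸) : (g • p).totalDegree ≤ p.totalDegree := by
  classical
  have hgp : g • p = aeval (fun i => g • (X i : 𝔸)) p := by
    have h : (MulSemiringAction.toAlgHom k 𝔸 g)
        = aeval (⇑(MulSemiringAction.toAlgHom k 𝔸 g) ∘ X) := aeval_unique _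
    show (MulSemiringAction.toAlgHom k 𝔸 g) p = _
    rw [h]
    rfl
  rw [hgp, aeval_def, eval₂_eq']
  apply (totalDegree_finset_sum _ _).trans
  apply Finset.sup_le
  intro d hd
  apply (totalDegree_mul _ _).trans
  have h2 : (∏ i, (g • (X i : 𝔸)) ^ d i).IsHomogeneous (∑ i, 1 * d i) :=
    IsHomogeneous.prod Finset.univ _ _ (fun i _ => (hlin g i).pow (d i))
  have h3 : (∏ i, (g • (X i : 𝔸)) ^ d i).totalDegree ≤ ∑ i, d i := by
    simpa using h2.totalDegree_le
  have h4 : ∑ i, d i ≤ p.totalDegree := by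
    have h5 := le_totalDegree hd
    rwa [Finsupp.sum_fintype _ _ (fun a => rfl)] at h5
  have h6 : ((algebraMap k 𝔸) (coeff d p)).totalDegree = 0 := totalDegree_C _
  omega

set_option linter.unusedSectionVars false in
set_option linter.unusedVariables false in
theorem auxDRS_indep [SMulCommClass G k 𝔸]
    (hcomp : ∀ (g : G) (p : 𝔸), g • (ιF p) = ιF (g • p))
    {ι : Type*} (χ : ι → (G →* kˣ)) (hχ : Function.Injective χ) (u : ι → 𝔸)
    (hu0 : ∀ i, u i ≠ 0)
    (heig : ∀ (i : ι) (g : G), g • (u i) = ((χ i g : kˣ) : k) • (u i)) :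
    LinearIndependent 𝕂 (fun i => ιF (u i)) := by
  classical
  rw [linearIndependent_iff']
  intro t f hsum i hit
  set φk : k →+* 𝔽 := (algebraMap 𝔸 𝔽).comp C with hφk
  have hφkinj : Function.Injective ⇑φk := φk.injective
  set ψ : ι → (G →* 𝔽) := fun i => φk.toMonoidHom.comp ((Units.coeHom k).comp (χ i)) with hψ
  have hψinj : Function.Injective ψ := by
    intro i j hij
    apply hχ
    ext g
    have h1 : φk ((χ i g : kˣ) : k) = φk ((χ j g : kˣ) : k) := DFunLike.congr_fun hij g
    exact_mod_cast hφkinj h1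
  have dedekind := ((linearIndependent_monoidHom G 𝔽).comp ψ hψinj)
  rw [linearIndependent_iff'] at dedekind
  have key : ∀ h : G, ∑ j ∈ t, ((f j : 𝔽) * ιF (u j)) * (ψ j h) = 0 := by
    intro h
    have h0 := congrArg (fun x => h • x) hsum
    simp only [smul_zero] at h0
    rw [Finset.smul_sum] at h0
    have h1 : ∀ j ∈ t, h • ((f j : 𝕂) • ιF (u j)) = ((f j : 𝔽) * ιF (u j)) * (ψ j h) := by
      intro j _
      have hs : (f j : 𝕂) • ιF (u j) = (f j : 𝔽) * ιF (u j) := rfl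
      rw [hs, smul_mul', (f j).2 h, hcomp, heig, smul_eq_C_mul, map_mul]
      show (f j : 𝔽) * (φk ((χ j h : kˣ) : k) * ιF (u j)) = _
      rw [show (ψ j) h = φk ((χ j h : kˣ) : k) from rfl]
      ring
    rw [Finset.sum_congr rfl h1] at h0
    exact h0
  have hv := dedekind t (fun j => (f j : 𝔽) * ιF (u j)) ?_ i hit
  · rcases mul_eq_zero.mp hv with h | h
    · exact_mod_cast h
    · exact absurd ((map_eq_zero_iff _ (IsFractionRing.injective 𝔸 𝔽)).mp h) (hu0 i)
  · funext h
    simp only [Finset.sum_apply, Pi.smul_apply, smul_eq_mul, Pi.zero_apply]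
    exact key h

set_option linter.unusedSectionVars false in
set_option linter.unusedVariables false in
theorem auxDRS_exists_eig [SMulCommClass G k 𝔸]
    (hfaithful : ∀ g : G, (∀ p : 𝔸, g • p = p) → g = 1)
    (hcomp : ∀ (g : G) (p : 𝔸), g • (ιF p) = ιF (g • p))
    {e : ℕ} (hB : Submodule.span 𝕂 (ιF '' {p : 𝔸 | p.totalDegree ≤ e}) = ⊤)
    (χ : G →* kˣ) :
    ∃ p : 𝔸, p.totalDegree ≤ e ∧ (∑ g : G, ((χ g⁻¹ : kˣ) : k) • (g • p)) ≠ 0 := by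
  classical
  by_contra hcon
  push_neg at hcon
  set a : G → 𝔽 := fun g => ιF (C ((χ g⁻¹ : kˣ) : k)) with ha
  set Q : 𝔽 → 𝔽 := fun x => ∑ g : G, a g * (g • x) with hQ
  have hQadd : ∀ x y, Q (x + y) = Q x + Q y := by
    intro x y
    simp only [hQ, smul_add, mul_add]
    rw [Finset.sum_add_distrib]
  have hQsmul : ∀ (c : 𝕂) (x : 𝔽), Q (c • x) = c • Q x := by
    intro c x
    show Q ((c : 𝔽) * x) = (c : 𝔽) * Q x
    simp only [hQ]
    rw [Finset.mul_sum]
    refine Finset.sum_congr rfl fun g _ => ?_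
    rw [smul_mul', c.2 g, mul_left_comm]
  set L : 𝔽 →ₗ[𝕂] 𝔽 := { toFun := Q, map_add' := hQadd, map_smul' := hQsmul } with hL
  have hL0 : ∀ q : 𝔸, q.totalDegree ≤ e → Q (ιF q) = 0 := by
    intro q hq
    have h1 : Q (ιF q) = ιF (∑ g : G, ((χ g⁻¹ : kˣ) : k) • (g • q)) := by
      rw [map_sum]
      refine Finset.sum_congr rfl fun g _ => ?_
      rw [hcomp, smul_eq_C_mul, map_mul]
    rw [h1, hcon q hq, map_zero]
  have hle : Submodule.span 𝕂 (ιF '' {p : 𝔸 | p.totalDegree ≤ e}) ≤ LinearMap.ker L := by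
    rw [Submodule.span_le]
    rintro _ ⟨q, hq, rfl⟩
    exact LinearMap.mem_ker.mpr (hL0 q hq)
  rw [hB, top_le_iff] at hle
  have hQ0 : ∀ x : 𝔽, Q x = 0 := by
    intro x
    have h2 := LinearMap.ker_eq_top.mp hle
    exact congrArg (fun (f : 𝔽 →ₗ[𝕂] 𝔽) => f x) h2
  set ρ : G → (𝔽 →* 𝔽) := fun g => (MulSemiringAction.toRingHom G 𝔽 g).toMonoidHom with hρ
  have hρinj : Function.Injective ρ := by
    intro g₁ g₂ h
    exact auxDRS_rho_inj k n G hfaithful hcomp g₁ g₂ fun x => DFunLike.congr_fun h x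
  have li := (linearIndependent_monoidHom 𝔽 𝔽).comp ρ hρinj
  have h2 := Fintype.linearIndependent_iff.mp li a ?_ 1
  · simp only [ha, inv_one, map_one, Units.val_one] at h2
    exact one_ne_zero h2
  · funext x
    simp only [Finset.sum_apply, Pi.smul_apply, smul_eq_mul, Pi.zero_apply]
    exact hQ0 x

/-- **Lemma (abelian case: `D_reg = D_span`).** Assume `k` is algebraically closed,
`char k ∤ |G|`, and `G` is abelian.  If `W ⊆ k[V]` is any `kG`-submodule isomorphic to the
regular representation `kG` (witnessed by a normal-basis element), then any `k`-basis of `W`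
is a `K = k(V)^G`-basis of `k(V)`.  Consequently `D_reg(G,V) = D_span(G,V)`. -/
theorem abelian_regular_basis_is_K_basis_and_Dreg_eq_Dspan
    [IsAlgClosed k]
    [SMulCommClass G k (MvPolynomial (Fin n) k)]
    (hlin : ∀ (g : G) (i : Fin n), ((g • (X i : 𝔸)).IsHomogeneous 1))
    (hfaithful : ∀ g : G, (∀ p : 𝔸, g • p = p) → g = 1)
    (hcomp : ∀ (g : G) (p : 𝔸), g • (ιF p) = ιF (g • p))
    (hchar : (Fintype.card G : k) ≠ 0)
    (hab : ∀ a b : G, a * b = b * a) :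
    (∀ W : Submodule k 𝔸,
      (∀ (g : G), ∀ p ∈ W, g • p ∈ W) →
      (∃ w₀ ∈ W, LinearIndependent k (fun g : G => g • w₀) ∧
        Submodule.span k (Set.range fun g : G => g • w₀) = W) →
      ∀ s : Set 𝔸, s ⊆ (W : Set 𝔸) →
        LinearIndependent k (fun x : s => (x : 𝔸)) →
        Submodule.span k s = W →
        (LinearIndependent 𝕂 (fun x : s => ιF (x : 𝔸)) ∧
          Submodule.span 𝕂 (ιF '' s) = ⊤)) ∧
    sInf {e : ℕ | ∃ W : Submodule k 𝔸,
        W ≤ MvPolynomial.restrictTotalDegree (Fin n) k e ∧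
        (∀ (g : G), ∀ p ∈ W, g • p ∈ W) ∧
        (∃ w₀ ∈ W, LinearIndependent k (fun g : G => g • w₀) ∧
          Submodule.span k (Set.range fun g : G => g • w₀) = W)}
      = sInf {e : ℕ | Submodule.span 𝕂 (ιF '' {p : 𝔸 | p.totalDegree ≤ e}) = ⊤} := by
  classical
  letI : CommGroup G := { (inferInstance : Group G) with mul_comm := hab }
  haveI hNZ : NeZero ((Monoid.exponent G : k)) := by
    constructor
    obtain ⟨m, hm⟩ := Group.exponent_dvd_card (G := G)
    intro h
    apply hchar
    rw [hm, Nat.cast_mul, h, zero_mul]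
  haveI : FaithfulSMul G 𝔽 :=
    ⟨fun {g₁ g₂} h => auxDRS_rho_inj k n G hfaithful hcomp g₁ g₂ h⟩
  obtain ⟨E⟩ := CommGroup.monoidHom_mulEquiv_of_hasEnoughRootsOfUnity G k
  haveI : Fintype (G →* kˣ) := Fintype.ofEquiv G E.symm.toEquiv
  haveI : Nonempty (G →* kˣ) := ⟨1⟩
  have hcardX : Fintype.card (G →* kˣ) = Fintype.card G := Fintype.card_congr E.toEquiv
  have hfinrank : Module.finrank 𝕂 𝔽 = Fintype.card G := FixedPoints.finrank_eq_card G 𝔽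
  have hCfix : ∀ c : k, (ιF (C c)) ∈ 𝕂 := fun c g => auxDRS_C_fixed k n G hcomp c g
  have hspan_map : ∀ (s : Set 𝔸) (p : 𝔸), p ∈ Submodule.span k s →
      ιF p ∈ Submodule.span 𝕂 (ιF '' s) := by
    intro s p hp
    induction hp using Submodule.span_induction with
    | mem x hx => exact Submodule.subset_span ⟨x, hx, rfl⟩
    | zero => simpa using (Submodule.span 𝕂 (ιF '' s)).zero_mem
    | add x y hx hy ihx ihy => rw [map_add]; exact Submodule.add_mem _ ihx ihy
    | smul c x hx ih =>
        rw [smul_eq_C_mul, map_mul]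
        rw [show (ιF (C c)) * (ιF x) = (⟨ιF (C c), hCfix c⟩ : 𝕂) • (ιF x) from rfl]
        exact Submodule.smul_mem _ _ ih
  have horth : ∀ a : G, a ≠ 1 → ∑ χ : G →* kˣ, ((χ a : kˣ) : k) = 0 := by
    intro a ha
    obtain ⟨χ₀, hχ₀⟩ := CommGroup.exists_apply_ne_one_of_hasEnoughRootsOfUnity G k ha
    have h1 : ((χ₀ a : kˣ) : k) * ∑ χ : G →* kˣ, ((χ a : kˣ) : k)
        = ∑ χ : G →* kˣ, ((χ a : kˣ) : k) := by
      rw [Finset.mul_sum]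
      rw [Finset.sum_congr rfl (fun χ _ => by
        rw [← Units.val_mul, ← MonoidHom.mul_apply] :
          ∀ χ ∈ Finset.univ, ((χ₀ a : kˣ) : k) * ((χ a : kˣ) : k) = (((χ₀ * χ) a : kˣ) : k))]
      exact Equiv.sum_comp (Equiv.mulLeft χ₀) (fun χ : G →* kˣ => ((χ a : kˣ) : k))
    have h3 : (((χ₀ a : kˣ) : k) - 1) * ∑ χ : G →* kˣ, ((χ a : kˣ) : k) = 0 := by
      rw [sub_mul, one_mul, h1, sub_self]
    rcases mul_eq_zero.mp h3 with h | h
    · exact absurd (Units.val_eq_one.mp (sub_eq_zero.mp h)) hχ₀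
    · exact h
  have part1 : ∀ W : Submodule k 𝔸,
      (∀ (g : G), ∀ p ∈ W, g • p ∈ W) →
      (∃ w₀ ∈ W, LinearIndependent k (fun g : G => g • w₀) ∧
        Submodule.span k (Set.range fun g : G => g • w₀) = W) →
      ∀ s : Set 𝔸, s ⊆ (W : Set 𝔸) →
        LinearIndependent k (fun x : s => (x : 𝔸)) →
        Submodule.span k s = W →
        (LinearIndependent 𝕂 (fun x : s => ιF (x : 𝔸)) ∧
          Submodule.span 𝕂 (ιF '' s) = ⊤) := by
    rintro W hWst ⟨w₀, hw₀W, hw₀li, hw₀sp⟩ s hsW hsli hssp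
    set u : (G →* kˣ) → 𝔸 := fun χ => ∑ g : G, ((χ g⁻¹ : kˣ) : k) • (g • w₀) with hu
    have heig : ∀ (χ : G →* kˣ) (h : G), h • u χ = ((χ h : kˣ) : k) • u χ :=
      fun χ h => auxDRS_eig k n G χ w₀ h
    have hu0 : ∀ χ, u χ ≠ 0 := by
      intro χ h0
      have h1 := Fintype.linearIndependent_iff.mp hw₀li (fun g => ((χ g⁻¹ : kˣ) : k)) h0 1
      simp only [inv_one, map_one, Units.val_one] at h1
      exact one_ne_zero h1
    have huW : ∀ χ, u χ ∈ W :=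
      fun χ => Submodule.sum_mem _ fun g _ => Submodule.smul_mem _ _ (hWst g w₀ hw₀W)
    have hKli : LinearIndependent 𝕂 (fun χ : G →* kˣ => ιF (u χ)) :=
      auxDRS_indep k n G hcomp id Function.injective_id u hu0 (fun i g => heig i g)
    have hspanu : Submodule.span 𝕂 (Set.range fun χ : G →* kˣ => ιF (u χ)) = ⊤ :=
      hKli.span_eq_top_of_card_eq_finrank (by rw [hcardX, hfinrank])
    have hstop : Submodule.span 𝕂 (ιF '' s) = ⊤ := by
      rw [← top_le_iff, ← hspanu, Submodule.span_le]
      rintro _ ⟨χ, rfl⟩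
      exact hspan_map s (u χ) (by rw [hssp]; exact huW χ)
    haveI hWfd : FiniteDimensional k ↥W := by
      rw [← hw₀sp]
      exact FiniteDimensional.span_of_finite k (Set.finite_range _)
    have hsli' : LinearIndependent k (fun x : s => (⟨(x : 𝔸), hsW x.2⟩ : ↥W)) := by
      apply LinearIndependent.of_comp W.subtype
      exact hsli
    haveI : Finite ↥s := hsli'.finite
    haveI : Fintype ↥s := Fintype.ofFinite _
    have hcards : Fintype.card ↥s = Fintype.card G := by
      have h1 : Module.finrank k ↥(Submodule.span k s) = s.toFinset.card :=
        finrank_span_set_eq_card hsli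
      have h2 : Module.finrank k ↥(Submodule.span k (Set.range fun g : G => g • w₀))
          = Fintype.card G := finrank_span_eq_card hw₀li
      rw [hssp] at h1
      rw [hw₀sp] at h2
      rw [← Set.toFinset_card, ← h1, h2]
    refine ⟨?_, hstop⟩
    apply linearIndependent_of_top_le_span_of_card_eq_finrank
    · rw [← Set.image_eq_range, hstop]
    · rw [hcards, hfinrank]
  refine ⟨part1, ?_⟩
  have hsetEq : {e : ℕ | ∃ W : Submodule k 𝔸,
        W ≤ MvPolynomial.restrictTotalDegree (Fin n) k e ∧
        (∀ (g : G), ∀ p ∈ W, g • p ∈ W) ∧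
        (∃ w₀ ∈ W, LinearIndependent k (fun g : G => g • w₀) ∧
          Submodule.span k (Set.range fun g : G => g • w₀) = W)}
      = {e : ℕ | Submodule.span 𝕂 (ιF '' {p : 𝔸 | p.totalDegree ≤ e}) = ⊤} := by
    ext e
    simp only [Set.mem_setOf_eq]
    constructor
    · rintro ⟨W, hWdeg, hWst, w₀, hw₀W, hw₀li, hw₀sp⟩
      have h1 := part1 W hWst ⟨w₀, hw₀W, hw₀li, hw₀sp⟩ (Set.range fun g : G => g • w₀)
        (by rintro _ ⟨g, rfl⟩; exact hWst g w₀ hw₀W) hw₀li.linearIndepOn_id hw₀sp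
      rw [← top_le_iff, ← h1.2]
      apply Submodule.span_mono
      apply Set.image_mono
      rintro _ ⟨g, rfl⟩
      exact (MvPolynomial.mem_restrictTotalDegree (Fin n) _ _).mp (hWdeg (hWst g w₀ hw₀W))
    · intro hB
      have hex : ∀ χ : G →* kˣ, ∃ q : 𝔸,
          q ∈ MvPolynomial.restrictTotalDegree (Fin n) k e ∧ q ≠ 0 ∧
          ∀ h : G, h • q = ((χ h : kˣ) : k) • q := by
        intro χ
        obtain ⟨p, hpdeg, hp0⟩ := auxDRS_exists_eig k n G hfaithful hcomp hB χ
        refine ⟨∑ g : G, ((χ g⁻¹ : kˣ) : k) • (g • p), ?_, hp0,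
          fun h => auxDRS_eig k n G χ p h⟩
        refine Submodule.sum_mem _ fun g _ => Submodule.smul_mem _ _ ?_
        exact (MvPolynomial.mem_restrictTotalDegree (Fin n) _ _).mpr
          ((auxDRS_deg k n G hlin g p).trans hpdeg)
      choose u hu1 hu2 hu3 using hex
      have hukli : LinearIndependent k u := by
        rw [Fintype.linearIndependent_iff]
        intro d hd χ
        have hKind := auxDRS_indep k n G hcomp id Function.injective_id u hu2
          (fun i g => hu3 i g)
        have h1 : ∑ χ' : G →* kˣ, (⟨ιF (C (d χ')), hCfix (d χ')⟩ : 𝕂) • ιF (u χ') = 0 := by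
          have h2 := congrArg (⇑(algebraMap 𝔸 𝔽)) hd
          rw [map_sum, map_zero] at h2
          rw [← h2]
          refine Finset.sum_congr rfl fun χ' _ => ?_
          show ιF (C (d χ')) * ιF (u χ') = ιF (d χ' • u χ')
          rw [smul_eq_C_mul, map_mul]
        have h3 := Fintype.linearIndependent_iff.mp hKind _ h1 χ
        have h4 : ιF (C (d χ)) = 0 := congrArg Subtype.val h3
        have h5 : (C (d χ) : 𝔸) = 0 := by
          apply IsFractionRing.injective 𝔸 𝔽
          rw [h4, map_zero]
        exact MvPolynomial.C_injective (Fin n) k (by rw [h5, map_zero])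
      set w₀ : 𝔸 := ∑ χ : G →* kˣ, u χ with hw₀
      have hgw : ∀ g : G, g • w₀ = ∑ χ : G →* kˣ, ((χ g : kˣ) : k) • u χ := by
        intro g
        rw [hw₀, Finset.smul_sum]
        exact Finset.sum_congr rfl fun χ _ => hu3 χ g
      have hwli : LinearIndependent k (fun g : G => g • w₀) := by
        rw [Fintype.linearIndependent_iff]
        intro c hc h
        have h1 : ∑ χ : G →* kˣ, (∑ g : G, c g * ((χ g : kˣ) : k)) • u χ = 0 := by
          rw [← hc]
          calc ∑ χ : G →* kˣ, (∑ g : G, c g * ((χ g : kˣ) : k)) • u χ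
              = ∑ χ : G →* kˣ, ∑ g : G, (c g * ((χ g : kˣ) : k)) • u χ := by
                refine Finset.sum_congr rfl fun χ _ => ?_
                rw [Finset.sum_smul]
            _ = ∑ g : G, ∑ χ : G →* kˣ, (c g * ((χ g : kˣ) : k)) • u χ := Finset.sum_comm
            _ = ∑ g : G, c g • (g • w₀) := by
                refine Finset.sum_congr rfl fun g _ => ?_
                rw [hgw g, Finset.smul_sum]
                exact Finset.sum_congr rfl fun χ _ => (smul_smul _ _ _).symm
        have h2 := fun χ => Fintype.linearIndependent_iff.mp hukli _ h1 χ
        have h3 : ∑ χ : G →* kˣ, ((χ h⁻¹ : kˣ) : k) * (∑ g : G, c g * ((χ g : kˣ) : k)) = 0 := by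
          simp only [h2, mul_zero, Finset.sum_const_zero]
        have h4 : ∑ g : G, c g * (∑ χ : G →* kˣ, ((χ (h⁻¹ * g) : kˣ) : k)) = 0 := by
          calc ∑ g : G, c g * (∑ χ : G →* kˣ, ((χ (h⁻¹ * g) : kˣ) : k))
              = ∑ g : G, ∑ χ : G →* kˣ, c g * ((χ (h⁻¹ * g) : kˣ) : k) := by
                exact Finset.sum_congr rfl fun g _ => Finset.mul_sum _ _ _
            _ = ∑ χ : G →* kˣ, ∑ g : G, c g * ((χ (h⁻¹ * g) : kˣ) : k) := Finset.sum_comm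
            _ = ∑ χ : G →* kˣ, ((χ h⁻¹ : kˣ) : k) * (∑ g : G, c g * ((χ g : kˣ) : k)) := by
                refine Finset.sum_congr rfl fun χ _ => ?_
                rw [Finset.mul_sum]
                refine Finset.sum_congr rfl fun g _ => ?_
                rw [map_mul, Units.val_mul]
                ring
            _ = 0 := h3
        have h5 : ∀ g : G, c g * (∑ χ : G →* kˣ, ((χ (h⁻¹ * g) : kˣ) : k))
            = if g = h then c h * (Fintype.card G : k) else 0 := by
          intro g
          by_cases hg : g = h
          · subst hg
            rw [if_pos rfl, inv_mul_cancel]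
            simp only [map_one, Units.val_one]
            rw [Finset.sum_const, nsmul_eq_mul, mul_one, Finset.card_univ, hcardX]
          · have hne : h⁻¹ * g ≠ 1 := fun hcontra =>
              hg (by rw [inv_mul_eq_one] at hcontra; exact hcontra.symm)
            rw [if_neg hg, horth _ hne, mul_zero]
        have h6 : c h * (Fintype.card G : k) = 0 := by
          have h7 := h4
          rw [Finset.sum_congr rfl fun g _ => h5 g] at h7
          rw [Finset.sum_ite_eq' Finset.univ h (fun _ => c h * (Fintype.card G : k))] at h7
          simpa using h7
        rcases mul_eq_zero.mp h6 with hcc | hcc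
        · exact hcc
        · exact absurd hcc hchar
      refine ⟨Submodule.span k (Set.range fun g : G => g • w₀), ?_, ?_, w₀, ?_, hwli, rfl⟩
      · rw [Submodule.span_le]
        rintro _ ⟨g, rfl⟩
        show g • w₀ ∈ MvPolynomial.restrictTotalDegree (Fin n) k e
        rw [hgw g]
        exact Submodule.sum_mem _ fun χ _ => Submodule.smul_mem _ _ (hu1 χ)
      · intro g p hp
        have h1 : (DistribMulAction.toLinearMap k 𝔸 g) p
            ∈ Submodule.map (DistribMulAction.toLinearMap k 𝔸 g)
              (Submodule.span k (Set.range fun g : G => g • w₀)) :=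
          Submodule.mem_map_of_mem hp
        rw [Submodule.map_span] at h1
        refine Submodule.span_le.mpr ?_ h1
        rintro _ ⟨_, ⟨h, rfl⟩, rfl⟩
        refine Submodule.subset_span ⟨g * h, ?_⟩
        show (g * h) • w₀ = g • (h • w₀)
        rw [mul_smul]
      · exact Submodule.subset_span ⟨1, one_smul G w₀⟩
  rw [hsetEq]

end
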